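/- Let λ and μ be l-multipartitions of n with μ cylindric, and suppose μ is obtained from μ^- by the reduction step (μ^- →^{j:k} μ, adding k boxes corresponding to replacing k column entries j+h-1 by j+h in rows c(μ),...,c(μ)+k-1). Let ν be a multipartition of n-k with ν →^{j:k} λ (in rows r_1,...,r_k) and μ^- ⊵ ν^R. Then μ ⊵ λ^R, with equality μ = λ^R only if μ^- = ν^R. -/

import Mathlib

open scoped Classical

namespace AK

/-- A partition, given by its parts indexed from 1 (index 0 unused and set to 0),
finitely supported and weakly decreasing on positive indices. -/
def IsPartitionF (p : ℕ →₀ ℕ) : Prop :=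
  p 0 = 0 ∧ ∀ i j : ℕ, 1 ≤ i → i ≤ j → p j ≤ p i

/-- An `l`-multipartition: rows `0,…,l-1` are partitions, rows `≥ l` are zero. -/
def IsMultipartition (l : ℕ) (lam : ℕ → ℕ →₀ ℕ) : Prop :=
  (∀ c, IsPartitionF (lam c)) ∧ ∀ c, l ≤ c → lam c = 0

/-- A multicharge: `s` is weakly increasing on `{0,…,l-1}`. -/
def IsMulticharge (l : ℕ) (s : ℕ → ℤ) : Prop :=
  ∀ c c' : ℕ, c ≤ c' → c' < l → s c ≤ s c'

/-- The rank of an `l`-multipartition. -/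
def rank (l : ℕ) (lam : ℕ → ℕ →₀ ℕ) : ℕ :=
  ∑ c ∈ Finset.range l, (lam c).sum fun _ v => v

/-- The entry of the shifted `s`-symbol of size `h` in row `c` at position `i`
(counted from the right): `λ^c_i - i + s_c + h`. -/
def symbEntry (s : ℕ → ℤ) (h : ℕ) (lam : ℕ → ℕ →₀ ℕ) (c i : ℕ) : ℤ :=
  ((lam c) i : ℤ) - (i : ℤ) + s c + (h : ℤ)

/-- `λ` is cylindric for the multicharge `s`: `λ^c_i ≥ λ^{c+1}_{i+s_{c+1}-s_c}`. -/
def Cylindric (l : ℕ) (s : ℕ → ℤ) (lam : ℕ → ℕ →₀ ℕ) : Prop :=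
  ∀ c : ℕ, c + 1 < l → ∀ i : ℕ, 1 ≤ i →
    (lam (c+1)) (i + (s (c+1) - s c).toNat) ≤ (lam c) i

/-- The shifted symbol is standard: columns weakly decrease from top to bottom, i.e.
`B^c_i ≥ B^{c+1}_{i+s_{c+1}-s_c}`. -/
def Standard (l : ℕ) (s : ℕ → ℤ) (h : ℕ) (lam : ℕ → ℕ →₀ ℕ) : Prop :=
  ∀ c : ℕ, c + 1 < l → ∀ i : ℕ, 1 ≤ i →
    symbEntry s h lam (c+1) (i + (s (c+1) - s c).toNat) ≤ symbEntry s h lam c i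

/-- The multiset of entries of the column of the symbol with column coordinate `j`
(row `c` meets this column at position `j + s_c`, when `j + s_c ≥ 1`). -/
def columnMultiset (l : ℕ) (s : ℕ → ℤ) (h : ℕ) (lam : ℕ → ℕ →₀ ℕ) (j : ℤ) : Multiset ℤ :=
  (((Finset.range l).filter (fun c => 1 ≤ j + s c)).val).map
    (fun c => symbEntry s h lam c (j + s c).toNat)

/-- `μ` is the regularization `λ^R` of `λ`: a multipartition whose symbol is standard and
whose columns carry the same multisets of entries as those of the symbol of `λ`. -/
def IsRegularization (l : ℕ) (s : ℕ → ℤ) (lam mu : ℕ → ℕ →₀ ℕ) : Prop :=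
  IsMultipartition l mu ∧ (∀ h : ℕ, Standard l s h mu) ∧
  ∀ (h : ℕ) (j : ℤ), columnMultiset l s h mu j = columnMultiset l s h lam j

/-- The dominance order: `lam ⊵ mu`. -/
def Dominates (l : ℕ) (lam mu : ℕ → ℕ →₀ ℕ) : Prop :=
  ∀ c : ℕ, c < l → ∀ k : ℕ,
    ((∑ i ∈ Finset.range c, (mu i).sum fun _ v => v) + ∑ j ∈ Finset.range k, (mu c) (j+1))
      ≤ ((∑ i ∈ Finset.range c, (lam i).sum fun _ v => v) + ∑ j ∈ Finset.range k, (lam c) (j+1))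

/-- The value `x` occurs in row `c` of the shifted symbol of size `h`. -/
def InRow (s : ℕ → ℤ) (h : ℕ) (lam : ℕ → ℕ →₀ ℕ) (c : ℕ) (x : ℤ) : Prop :=
  ∃ p : ℕ, 1 ≤ p ∧ (p : ℤ) ≤ (h : ℤ) + s c ∧ symbEntry s h lam c p = x

/-- `R(λ)_{(j,c)}`: the number of rows `c' > c` with `B^c_j < B^{c'}_{j+s_{c'}-s_c}` and
`B^c_j` not occurring in row `c'`. -/
noncomputable def RstatAt (l : ℕ) (s : ℕ → ℤ) (h : ℕ) (lam : ℕ → ℕ →₀ ℕ) (c j : ℕ) : ℕ :=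
  ((Finset.range l).filter (fun c' => c < c' ∧
      symbEntry s h lam c j < symbEntry s h lam c' (j + (s c' - s c).toNat) ∧
      ¬ InRow s h lam c' (symbEntry s h lam c j))).card

/-- The regularization statistic `R(λ)`. -/
noncomputable def Rstat (l : ℕ) (s : ℕ → ℤ) (h : ℕ) (lam : ℕ → ℕ →₀ ℕ) : ℕ :=
  ∑ c ∈ Finset.range l, ∑ j ∈ Finset.Icc 1 (((h : ℤ) + s c).toNat), RstatAt l s h lam c j

/-- `h` is an admissible size for the symbol of `λ`: every row is nonempty and long enough
to contain all nonzero parts. -/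
def Admissible (l : ℕ) (s : ℕ → ℤ) (h : ℕ) (lam : ℕ → ℕ →₀ ℕ) : Prop :=
  ∀ c : ℕ, c < l → 1 ≤ (h : ℤ) + s c ∧ (lam c) (((h : ℤ) + s c).toNat) = 0

/-- `mu = lam⁻` is obtained from the nonempty cylindric `lam` by the reduction step:
`c0` is the least index of a nonempty component, `i0` the minimal position of a gap,
and the `r0` equal column entries `j(λ)` are decreased by `1`. -/
def IsReduction (l : ℕ) (s : ℕ → ℤ) (lam mu : ℕ → ℕ →₀ ℕ) : Prop :=
  ∃ c0 i0 r0 : ℕ, c0 < l ∧ (lam c0) 1 ≠ 0 ∧ (∀ c, c < c0 → (lam c) 1 = 0) ∧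
    1 ≤ i0 ∧ (lam c0) (i0+1) < (lam c0) i0 ∧
    (∀ i, 1 ≤ i → i < i0 → (lam c0) (i+1) = (lam c0) i) ∧
    1 ≤ r0 ∧ c0 + r0 ≤ l ∧
    (∀ k, k < r0 → (lam (c0+k)) (i0 + (s (c0+k) - s c0).toNat) = (lam c0) i0) ∧
    (c0 + r0 = l ∨ (lam (c0+r0)) (i0 + (s (c0+r0) - s c0).toNat) ≠ (lam c0) i0) ∧
    (∀ c i, (mu c) i =
      if c0 ≤ c ∧ c < c0 + r0 ∧ i = i0 + (s c - s c0).toNat then (lam c) i - 1 else (lam c) i)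

/-- Row `c` of the symbol of `xi` is obtained from that of `nu` by replacing the
entry `j+h-1` with `j+h`. -/
def ArrowRow (s : ℕ → ℤ) (h : ℕ) (j : ℤ) (nu xi : ℕ → ℕ →₀ ℕ) (c : ℕ) : Prop :=
  ∃ p : ℕ, 1 ≤ p ∧ (p : ℤ) ≤ (h : ℤ) + s c ∧
    symbEntry s h nu c p = j + h - 1 ∧ symbEntry s h xi c p = j + h ∧
    ∀ i, 1 ≤ i → i ≠ p → symbEntry s h xi c i = symbEntry s h nu c i

/-- `nu →^{j:k} xi` along the set `rows` of `k` distinct rows. -/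
def Arrow (l : ℕ) (s : ℕ → ℤ) (h : ℕ) (j : ℤ) (rows : Finset ℕ)
    (nu xi : ℕ → ℕ →₀ ℕ) : Prop :=
  (∀ c ∈ rows, c < l) ∧ (∀ c ∈ rows, ArrowRow s h j nu xi c) ∧
  ∀ c, c ∉ rows → ∀ i, 1 ≤ i → symbEntry s h xi c i = symbEntry s h nu c i

/-- Number of entries of row `c` of the symbol equal to `x`. -/
noncomputable def countVal (s : ℕ → ℤ) (h : ℕ) (lam : ℕ → ℕ →₀ ℕ) (c : ℕ) (x : ℤ) : ℕ :=
  ((Finset.Icc 1 (((h : ℤ) + s c).toNat)).filter (fun i => symbEntry s h lam c i = x)).card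

/-- The exponent `N_j(ν,ξ)` in the Fock space action of `f_j^{(k)}`. -/
noncomputable def Nstat (s : ℕ → ℤ) (h : ℕ) (j : ℤ) (rows : Finset ℕ)
    (nu xi : ℕ → ℕ →₀ ℕ) : ℤ :=
  ∑ t ∈ rows,
    ((∑ c ∈ Finset.range (t+1), (countVal s h xi c (j + h - 1) : ℤ))
      - ∑ c ∈ Finset.range (t+1), (countVal s h nu c (j + h) : ℤ))


-- ===================== auxiliary development =====================

section Aux

variable {l : ℕ} {s : ℕ → ℤ} {h : ℕ}

/-- Number of entries `≥ x` in column `j'` of the symbol of `α`, as a `Finset` card. -/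
noncomputable def cntF (l : ℕ) (s : ℕ → ℤ) (h : ℕ) (α : ℕ → ℕ →₀ ℕ) (j' x : ℤ) : ℕ :=
  ((Finset.range l).filter
    (fun c => 1 ≤ j' + s c ∧ x ≤ symbEntry s h α c (j' + s c).toNat)).card

/-- Rank of row `c` within column `j'` (number of rows `≤ c` meeting the column). -/
def rnk (s : ℕ → ℤ) (j' : ℤ) (c : ℕ) : ℕ :=
  ((Finset.range (c+1)).filter (fun c' => 1 ≤ j' + s c')).card

lemma cntF_eq_countP (α : ℕ → ℕ →₀ ℕ) (j' x : ℤ) :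
    cntF l s h α j' x
      = Multiset.countP (fun e => x ≤ e) (columnMultiset l s h α j') := by
  classical
  unfold cntF columnMultiset
  rw [Multiset.countP_map]
  rw [← Finset.filter_val, ← Finset.filter_filter]
  rfl

lemma cntF_congr {α β : ℕ → ℕ →₀ ℕ} (j' x : ℤ)
    (hcol : columnMultiset l s h α j' = columnMultiset l s h β j') :
    cntF l s h α j' x = cntF l s h β j' x := by
  rw [cntF_eq_countP, cntF_eq_countP, hcol]

/-- Entries weakly decrease down a column of a standard symbol. -/
lemma col_mono (hs : IsMulticharge l s) {α : ℕ → ℕ →₀ ℕ}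
    (hst : Standard l s h α) (j' : ℤ) :
    ∀ c2 c1, c1 ≤ c2 → c2 < l → 1 ≤ j' + s c1 →
      symbEntry s h α c2 (j' + s c2).toNat ≤ symbEntry s h α c1 (j' + s c1).toNat := by
  intro c2
  induction c2 with
  | zero =>
    intro c1 h1 _ _
    have : c1 = 0 := Nat.le_zero.mp h1
    subst this; exact le_refl _
  | succ c2 ih =>
    intro c1 hle hlt hcol
    rcases Nat.eq_or_lt_of_le hle with rfl | hlt'
    · exact le_refl _
    · have hc1c2 : c1 ≤ c2 := Nat.lt_succ_iff.mp hlt'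
      have hc2l : c2 < l := by omega
      have hmono : s c2 ≤ s (c2+1) := hs c2 (c2+1) (by omega) hlt
      have hmono2 : s c1 ≤ s c2 := hs c1 c2 hc1c2 hc2l
      have hcol2 : 1 ≤ j' + s c2 := by omega
      have hstep := hst c2 hlt (j' + s c2).toNat (by omega)
      have hpos : (j' + s c2).toNat + (s (c2+1) - s c2).toNat = (j' + s (c2+1)).toNat := by
        omega
      rw [hpos] at hstep
      exact le_trans hstep (ih c1 hc1c2 hc2l hcol)

/-- Parts weakly decrease down a column of a cylindric multipartition. -/
lemma col_mono_part (hs : IsMulticharge l s) {α : ℕ → ℕ →₀ ℕ}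
    (hcy : Cylindric l s α) (j' : ℤ) :
    ∀ c2 c1, c1 ≤ c2 → c2 < l → 1 ≤ j' + s c1 →
      (α c2) (j' + s c2).toNat ≤ (α c1) (j' + s c1).toNat := by
  intro c2
  induction c2 with
  | zero =>
    intro c1 h1 _ _
    have : c1 = 0 := Nat.le_zero.mp h1
    subst this; exact le_refl _
  | succ c2 ih =>
    intro c1 hle hlt hcol
    rcases Nat.eq_or_lt_of_le hle with rfl | hlt'
    · exact le_refl _
    · have hc1c2 : c1 ≤ c2 := Nat.lt_succ_iff.mp hlt'
      have hc2l : c2 < l := by omega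
      have hmono : s c2 ≤ s (c2+1) := hs c2 (c2+1) (by omega) hlt
      have hmono2 : s c1 ≤ s c2 := hs c1 c2 hc1c2 hc2l
      have hcol2 : 1 ≤ j' + s c2 := by omega
      have hstep := hcy c2 hlt (j' + s c2).toNat (by omega)
      have hpos : (j' + s c2).toNat + (s (c2+1) - s c2).toNat = (j' + s (c2+1)).toNat := by
        omega
      rw [hpos] at hstep
      exact le_trans hstep (ih c1 hc1c2 hc2l hcol)

/-- For a standard symbol, an entry is `≥ x` iff the rank of its row in its column is at
most the number of column entries `≥ x`. -/
lemma entry_ge_iff (hs : IsMulticharge l s) {α : ℕ → ℕ →₀ ℕ}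
    (hst : Standard l s h α) (j' x : ℤ) (c : ℕ) (hc : c < l) (hcol : 1 ≤ j' + s c) :
    x ≤ symbEntry s h α c (j' + s c).toNat ↔ rnk s j' c ≤ cntF l s h α j' x := by
  constructor
  · intro hx
    apply Finset.card_le_card
    intro c' hc'
    simp only [Finset.mem_filter, Finset.mem_range] at hc' ⊢
    obtain ⟨hc'r, hc'col⟩ := hc'
    exact ⟨by omega, hc'col,
      le_trans hx (col_mono hs hst j' c c' (by omega) hc hc'col)⟩
  · intro hr
    by_contra hx
    push_neg at hx
    have hsub : (Finset.range l).filter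
        (fun c'' => 1 ≤ j' + s c'' ∧ x ≤ symbEntry s h α c'' (j' + s c'').toNat)
        ⊆ (Finset.range c).filter (fun c' => 1 ≤ j' + s c') := by
      intro c'' hmem
      simp only [Finset.mem_filter, Finset.mem_range] at hmem ⊢
      obtain ⟨hc''l, hc''col, hc''x⟩ := hmem
      refine ⟨?_, hc''col⟩
      by_contra hge
      push_neg at hge
      have := col_mono hs hst j' c'' c hge hc''l hcol
      omega
    have h1 : cntF l s h α j' x
        ≤ ((Finset.range c).filter (fun c' => 1 ≤ j' + s c')).card :=
      Finset.card_le_card hsub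
    have h2 : ((Finset.range c).filter (fun c' => 1 ≤ j' + s c')).card < rnk s j' c := by
      apply Finset.card_lt_card
      constructor
      · exact Finset.filter_subset_filter _ (Finset.range_subset_range.mpr (by omega))
      · intro habs
        have hmem : c ∈ (Finset.range (c+1)).filter (fun c' => 1 ≤ j' + s c') := by
          simp only [Finset.mem_filter, Finset.mem_range]
          exact ⟨by omega, hcol⟩
        have := habs hmem
        simp only [Finset.mem_filter, Finset.mem_range] at this
        omega
    unfold rnk at *
    omega

/-- Rank is strictly monotone among rows of a column. -/
lemma rnk_strict_mono (j' : ℤ) {c1 c2 : ℕ} (h12 : c1 < c2) (hcol : 1 ≤ j' + s c2) :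
    rnk s j' c1 < rnk s j' c2 := by
  apply Finset.card_lt_card
  constructor
  · exact Finset.filter_subset_filter _ (Finset.range_subset_range.mpr (by omega))
  · intro habs
    have hmem : c2 ∈ (Finset.range (c2+1)).filter (fun c' => 1 ≤ j' + s c') := by
      simp only [Finset.mem_filter, Finset.mem_range]; exact ⟨by omega, hcol⟩
    have := habs hmem
    simp only [Finset.mem_filter, Finset.mem_range] at this
    omega

end Aux


section Aux2

variable {l : ℕ} {s : ℕ → ℤ} {h : ℕ}

/-- Effect of an arrow on column counts. -/
lemma cnt_arrow (j : ℤ) (rows : Finset ℕ) (pos : ℕ → ℕ) (nu lam : ℕ → ℕ →₀ ℕ)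
    (hlt : ∀ c ∈ rows, c < l)
    (hposp : ∀ c ∈ rows, 1 ≤ pos c ∧ symbEntry s h nu c (pos c) = j + h - 1 ∧
       symbEntry s h lam c (pos c) = j + h ∧
       ∀ i, 1 ≤ i → i ≠ pos c → symbEntry s h lam c i = symbEntry s h nu c i)
    (hout : ∀ c, c ∉ rows → ∀ i, 1 ≤ i → symbEntry s h lam c i = symbEntry s h nu c i)
    (j' x : ℤ) :
    cntF l s h lam j' x = cntF l s h nu j' x +
      if x = j + h then (rows.filter (fun c => (pos c : ℤ) = j' + s c)).card else 0 := by
  classical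
  have keyCh : ∀ c ∈ rows, (pos c : ℤ) = j' + s c →
      symbEntry s h nu c (j' + s c).toNat = j + h - 1 ∧
      symbEntry s h lam c (j' + s c).toNat = j + h := by
    intro c hc hpc
    obtain ⟨h1, h2, h3, _⟩ := hposp c hc
    have htn : (j' + s c).toNat = pos c := by omega
    rw [htn]; exact ⟨h2, h3⟩
  have keyUn : ∀ c, 1 ≤ j' + s c → ¬(c ∈ rows ∧ (pos c : ℤ) = j' + s c) →
      symbEntry s h lam c (j' + s c).toNat = symbEntry s h nu c (j' + s c).toNat := by
    intro c hcol hnch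
    by_cases hcr : c ∈ rows
    · obtain ⟨h1, _, _, h4⟩ := hposp c hcr
      apply h4
      · omega
      · intro habs
        exact hnch ⟨hcr, by rw [← habs]; omega⟩
    · exact hout c hcr _ (by omega)
  set Ch : ℕ → Prop := fun c => c ∈ rows ∧ (pos c : ℤ) = j' + s c with hCh
  have hsplit : ∀ (α : ℕ → ℕ →₀ ℕ),
      ((Finset.range l).filter (fun c =>
        (1 ≤ j' + s c ∧ x ≤ symbEntry s h α c (j' + s c).toNat) ∧ Ch c)).card +
      ((Finset.range l).filter (fun c =>
        (1 ≤ j' + s c ∧ x ≤ symbEntry s h α c (j' + s c).toNat) ∧ ¬ Ch c)).card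
      = cntF l s h α j' x := by
    intro α
    have hh := Finset.card_filter_add_card_filter_not
      (s := (Finset.range l).filter (fun c =>
        1 ≤ j' + s c ∧ x ≤ symbEntry s h α c (j' + s c).toNat)) (p := Ch)
    rw [Finset.filter_filter, Finset.filter_filter] at hh
    unfold cntF
    exact hh
  rw [← hsplit lam, ← hsplit nu]
  have hUn : ((Finset.range l).filter (fun c =>
        (1 ≤ j' + s c ∧ x ≤ symbEntry s h lam c (j' + s c).toNat) ∧ ¬ Ch c))
      = ((Finset.range l).filter (fun c =>
        (1 ≤ j' + s c ∧ x ≤ symbEntry s h nu c (j' + s c).toNat) ∧ ¬ Ch c)) := by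
    apply Finset.filter_congr
    intro c _
    by_cases hcol : 1 ≤ j' + s c
    · by_cases hch : Ch c
      · constructor
        · rintro ⟨_, hc⟩; exact absurd hch hc
        · rintro ⟨_, hc⟩; exact absurd hch hc
      · have hk := keyUn c hcol hch
        constructor
        · rintro ⟨⟨h1, h2⟩, h3⟩; exact ⟨⟨h1, by rw [← hk]; exact h2⟩, h3⟩
        · rintro ⟨⟨h1, h2⟩, h3⟩; exact ⟨⟨h1, by rw [hk]; exact h2⟩, h3⟩
    · constructor
      · rintro ⟨⟨h1, _⟩, _⟩; exact absurd h1 hcol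
      · rintro ⟨⟨h1, _⟩, _⟩; exact absurd h1 hcol
  rw [hUn]
  by_cases hx : x = j + h
  · rw [if_pos hx]
    have hBnu : ((Finset.range l).filter (fun c =>
          (1 ≤ j' + s c ∧ x ≤ symbEntry s h nu c (j' + s c).toNat) ∧ Ch c)) = ∅ := by
      apply Finset.filter_false_of_mem
      intro c _
      rintro ⟨⟨hcol, hxle⟩, hch⟩
      have := (keyCh c hch.1 hch.2).1
      omega
    have hBlam : ((Finset.range l).filter (fun c =>
          (1 ≤ j' + s c ∧ x ≤ symbEntry s h lam c (j' + s c).toNat) ∧ Ch c))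
        = rows.filter (fun c => (pos c : ℤ) = j' + s c) := by
      ext c
      simp only [Finset.mem_filter, Finset.mem_range]
      constructor
      · rintro ⟨_, _, hcl, hpc⟩
        exact ⟨hcl, hpc⟩
      · rintro ⟨hcl, hpc⟩
        have h1 := (hposp c hcl).1
        have hcol : 1 ≤ j' + s c := by omega
        refine ⟨hlt c hcl, ⟨hcol, ?_⟩, hcl, hpc⟩
        rw [(keyCh c hcl hpc).2]
        omega
    rw [hBnu, hBlam]
    simp only [Finset.card_empty]
    omega
  · rw [if_neg hx, add_zero]
    have hBeq : ((Finset.range l).filter (fun c =>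
          (1 ≤ j' + s c ∧ x ≤ symbEntry s h lam c (j' + s c).toNat) ∧ Ch c))
        = ((Finset.range l).filter (fun c =>
          (1 ≤ j' + s c ∧ x ≤ symbEntry s h nu c (j' + s c).toNat) ∧ Ch c)) := by
      apply Finset.filter_congr
      intro c _
      by_cases hch : Ch c
      · obtain ⟨hnu, hlam⟩ := keyCh c hch.1 hch.2
        rw [hnu, hlam]
        constructor
        · rintro ⟨⟨hcol, hxle⟩, _⟩; exact ⟨⟨hcol, by omega⟩, hch⟩
        · rintro ⟨⟨hcol, hxle⟩, _⟩; exact ⟨⟨hcol, by omega⟩, hch⟩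
      · simp [hch]
    rw [hBeq]

/-- Adding a single box: total sum. -/
lemma sum_box {f g : ℕ →₀ ℕ} {p : ℕ} (hp : 1 ≤ p)
    (hrel : ∀ i, g i = f i + if i = p then 1 else 0) :
    (g.sum fun _ v => v) = (f.sum fun _ v => v) + 1 := by
  have hg : g = f + Finsupp.single p 1 := by
    ext i
    rw [Finsupp.add_apply, Finsupp.single_apply, hrel i]
    congr 1
    by_cases hip : i = p
    · subst hip; simp
    · rw [if_neg hip, if_neg (fun habs => hip habs.symm)]
  rw [hg, Finsupp.sum_add_index' (fun a => rfl) (fun a b c => rfl),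
    Finsupp.sum_single_index rfl]

/-- Adding a single box: partial sums. -/
lemma psum_box {f g : ℕ →₀ ℕ} {p : ℕ} (hp : 1 ≤ p)
    (hrel : ∀ i, g i = f i + if i = p then 1 else 0) (m : ℕ) :
    ∑ jj ∈ Finset.range m, g (jj+1)
      = (∑ jj ∈ Finset.range m, f (jj+1)) + if p ≤ m then 1 else 0 := by
  have hterm : ∀ jj, g (jj+1) = f (jj+1) + if jj = p - 1 then 1 else 0 := by
    intro jj
    rw [hrel (jj+1)]
    congr 1
    by_cases hj : jj + 1 = p
    · rw [if_pos hj, if_pos (by omega)]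
    · rw [if_neg hj, if_neg (by omega)]
  simp_rw [hterm]
  rw [Finset.sum_add_distrib, Finset.sum_ite_eq' (Finset.range m) (p-1) (fun _ => 1)]
  by_cases hpm : p ≤ m
  · rw [if_pos hpm, if_pos (Finset.mem_range.mpr (by omega))]
  · rw [if_neg hpm, if_neg (fun habs => by have := Finset.mem_range.mp habs; omega)]

end Aux2


section Aux3

variable {l : ℕ} {s : ℕ → ℤ} {h : ℕ}

/-- Pointwise comparison of the regularizations along an arrow. -/
lemma key_pointwise (hs : IsMulticharge l s) (j : ℤ)
    (rows : Finset ℕ) (pos : ℕ → ℕ) (nu lam nuR lamR : ℕ → ℕ →₀ ℕ)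
    (hlt : ∀ c ∈ rows, c < l)
    (hposp : ∀ c ∈ rows, 1 ≤ pos c ∧ symbEntry s h nu c (pos c) = j + h - 1 ∧
       symbEntry s h lam c (pos c) = j + h ∧
       ∀ i, 1 ≤ i → i ≠ pos c → symbEntry s h lam c i = symbEntry s h nu c i)
    (hout : ∀ c, c ∉ rows → ∀ i, 1 ≤ i → symbEntry s h lam c i = symbEntry s h nu c i)
    (hregnu : IsRegularization l s nu nuR) (hreglam : IsRegularization l s lam lamR)
    (c : ℕ) (hc : c < l) (i : ℕ) (hi : 1 ≤ i) :
    nuR c i ≤ lamR c i ∧ lamR c i ≤ nuR c i + 1 ∧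
      (lamR c i = nuR c i + 1 →
        ((nuR c i : ℤ) = j - 1 + i - s c) ∧
        cntF l s h nu ((i:ℤ) - s c) (j + h) < rnk s ((i:ℤ) - s c) c ∧
        rnk s ((i:ℤ) - s c) c ≤ cntF l s h nu ((i:ℤ) - s c) (j + h) +
          (rows.filter (fun c' => (pos c' : ℤ) = ((i:ℤ) - s c) + s c')).card) := by
  classical
  set j' : ℤ := (i : ℤ) - s c with hj'
  have hcol : 1 ≤ j' + s c := by omega
  have htn : (j' + s c).toNat = i := by omega
  set T : ℕ := (rows.filter (fun c' => (pos c' : ℤ) = j' + s c')).card with hT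
  have hEn : ∀ x : ℤ, x ≤ symbEntry s h nuR c i ↔ rnk s j' c ≤ cntF l s h nu j' x := by
    intro x
    rw [← htn, entry_ge_iff hs (hregnu.2.1 h) j' x c hc hcol,
      cntF_congr j' x (hregnu.2.2 h j')]
  have hEl : ∀ x : ℤ, x ≤ symbEntry s h lamR c i ↔
      rnk s j' c ≤ cntF l s h nu j' x + if x = j + h then T else 0 := by
    intro x
    rw [← htn, entry_ge_iff hs (hreglam.2.1 h) j' x c hc hcol,
      cntF_congr j' x (hreglam.2.2 h j'),
      cnt_arrow j rows pos nu lam hlt hposp hout j' x]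
  have hdiffn : symbEntry s h nuR c i = (nuR c i : ℤ) - i + s c + h := rfl
  have hdiffl : symbEntry s h lamR c i = (lamR c i : ℤ) - i + s c + h := rfl
  set En : ℤ := symbEntry s h nuR c i with hEn'
  set El : ℤ := symbEntry s h lamR c i with hEl'
  have h1 : En ≤ El := by
    have := (hEn En).mp le_rfl
    have h2 := (hEl En).mpr (by split_ifs <;> omega)
    omega
  have h2 : El ≤ En + 1 := by
    by_contra habs
    push_neg at habs
    set x0 : ℤ := if En + 1 = j + h then En + 2 else En + 1 with hx0
    have hx0v : x0 ≠ j + h := by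
      by_cases hcase : En + 1 = j + h
      · rw [hx0, if_pos hcase]; omega
      · rw [hx0, if_neg hcase]; omega
    have hx0le : x0 ≤ El := by
      by_cases hcase : En + 1 = j + h
      · rw [hx0, if_pos hcase]; omega
      · rw [hx0, if_neg hcase]; omega
    have := (hEl x0).mp hx0le
    rw [if_neg hx0v, add_zero] at this
    have := (hEn x0).mpr this
    by_cases hcase : En + 1 = j + h
    · rw [hx0, if_pos hcase] at this; omega
    · rw [hx0, if_neg hcase] at this; omega
  refine ⟨by omega, by omega, ?_⟩
  intro hbump
  have hElEn : El = En + 1 := by omega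
  have hEnval : En + 1 = j + h := by
    by_contra hne
    have hle : En + 1 ≤ El := by omega
    have := (hEl (En + 1)).mp hle
    rw [if_neg hne, add_zero] at this
    have := (hEn (En + 1)).mpr this
    omega
  refine ⟨by omega, ?_, ?_⟩
  · have : ¬ (j + h ≤ En) := by omega
    rw [hEn (j + h)] at this
    omega
  · have : j + h ≤ El := by omega
    rw [hEl (j + h), if_pos rfl] at this
    exact this

/-- Each row of `lamR` differs from `nuR` by at most one box, at a content-`j` position. -/
lemma row_box (hs : IsMulticharge l s) (j : ℤ)
    (rows : Finset ℕ) (pos : ℕ → ℕ) (nu lam nuR lamR : ℕ → ℕ →₀ ℕ)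
    (hlt : ∀ c ∈ rows, c < l)
    (hposp : ∀ c ∈ rows, 1 ≤ pos c ∧ symbEntry s h nu c (pos c) = j + h - 1 ∧
       symbEntry s h lam c (pos c) = j + h ∧
       ∀ i, 1 ≤ i → i ≠ pos c → symbEntry s h lam c i = symbEntry s h nu c i)
    (hout : ∀ c, c ∉ rows → ∀ i, 1 ≤ i → symbEntry s h lam c i = symbEntry s h nu c i)
    (hregnu : IsRegularization l s nu nuR) (hreglam : IsRegularization l s lam lamR)
    (c : ℕ) (hc : c < l) (hne : lamR c ≠ nuR c) :
    ∃ p, 1 ≤ p ∧ ((nuR c p : ℤ) = j - 1 + p - s c) ∧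
      (∀ i, lamR c i = nuR c i + if i = p then 1 else 0) ∧
      cntF l s h nu ((p:ℤ) - s c) (j + h) < rnk s ((p:ℤ) - s c) c ∧
      rnk s ((p:ℤ) - s c) c ≤ cntF l s h nu ((p:ℤ) - s c) (j + h) +
        (rows.filter (fun c' => (pos c' : ℤ) = ((p:ℤ) - s c) + s c')).card := by
  classical
  have hkey := fun (i : ℕ) (hi : 1 ≤ i) =>
    key_pointwise hs j rows pos nu lam nuR lamR hlt hposp hout hregnu hreglam c hc i hi
  have hzero : lamR c 0 = nuR c 0 := by
    rw [(hreglam.1.1 c).1, (hregnu.1.1 c).1]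
  obtain ⟨p, hp⟩ : ∃ p, lamR c p ≠ nuR c p := by
    by_contra habs
    push_neg at habs
    exact hne (Finsupp.ext habs)
  have hp1 : 1 ≤ p := by
    rcases Nat.eq_zero_or_pos p with rfl | hpos
    · exact absurd hzero hp
    · exact hpos
  obtain ⟨ha, hb, hcc⟩ := hkey p hp1
  have hbump : lamR c p = nuR c p + 1 := by omega
  obtain ⟨hcontent, hlt', hle'⟩ := hcc hbump
  refine ⟨p, hp1, hcontent, ?_, hlt', hle'⟩
  intro i
  rcases Nat.eq_zero_or_pos i with rfl | hipos
  · rw [if_neg (by omega), hzero, add_zero]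
  · by_cases hip : i = p
    · subst hip; rw [if_pos rfl]; exact hbump
    · rw [if_neg hip, add_zero]
      by_contra habs
      obtain ⟨ha2, hb2, hcc2⟩ := hkey i hipos
      have hbump2 : lamR c i = nuR c i + 1 := by omega
      obtain ⟨hcontent2, _, _⟩ := hcc2 hbump2
      have hmono := (hregnu.1.1 c).2
      rcases Nat.lt_or_ge i p with hlt2 | hge2
      · have := hmono i p hipos (by omega)
        omega
      · have := hmono p i hp1 (by omega)
        omega

/-- The number of bumped rows is at most the number of arrow rows. -/
lemma fiber_count (rows : Finset ℕ) (pos : ℕ → ℕ) (nu : ℕ → ℕ →₀ ℕ) (j : ℤ)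
    (BR : Finset ℕ) (pB : ℕ → ℕ)
    (hprops : ∀ c ∈ BR, 1 ≤ pB c ∧
      cntF l s h nu ((pB c : ℤ) - s c) (j + h) < rnk s ((pB c : ℤ) - s c) c ∧
      rnk s ((pB c : ℤ) - s c) c ≤ cntF l s h nu ((pB c : ℤ) - s c) (j + h) +
        (rows.filter (fun c' => (pos c' : ℤ) = ((pB c : ℤ) - s c) + s c')).card) :
    BR.card ≤ rows.card := by
  classical
  have hfeq : ∀ j' : ℤ, (rows.filter (fun c' => (pos c' : ℤ) = j' + s c'))
      = rows.filter (fun c' => (pos c' : ℤ) - s c' = j') := by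
    intro j'
    apply Finset.filter_congr
    intro c' _
    constructor <;> intro <;> omega
  have hmem : ∀ c ∈ BR, ((pB c : ℤ) - s c) ∈ rows.image (fun c' => (pos c' : ℤ) - s c') := by
    intro c hc
    obtain ⟨_, hlt, hle⟩ := hprops c hc
    rw [hfeq] at hle
    have hpos0 : 0 < (rows.filter (fun c' => (pos c' : ℤ) - s c' = (pB c : ℤ) - s c)).card := by
      omega
    obtain ⟨c', hc'⟩ := Finset.card_pos.mp hpos0
    simp only [Finset.mem_filter] at hc'
    exact Finset.mem_image.mpr ⟨c', hc'.1, hc'.2⟩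
  rw [Finset.card_eq_sum_card_fiberwise hmem,
    Finset.card_eq_sum_card_fiberwise
      (fun c' (hc' : c' ∈ rows) => Finset.mem_image_of_mem (fun c'' => (pos c'' : ℤ) - s c'') hc')]
  apply Finset.sum_le_sum
  intro j' _
  have hcard : (BR.filter (fun c => (pB c : ℤ) - s c = j')).card
      ≤ (Finset.Ioc (cntF l s h nu j' (j + h))
          (cntF l s h nu j' (j + h) + (rows.filter (fun c' => (pos c' : ℤ) - s c' = j')).card)).card := by
    apply Finset.card_le_card_of_injOn (fun c => rnk s j' c)
    · intro c hcmem
      simp only [Finset.coe_filter, Set.mem_setOf_eq] at hcmem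
      obtain ⟨hcBR, hphi⟩ := hcmem
      obtain ⟨hp1, hlt, hle⟩ := hprops c hcBR
      rw [hfeq] at hle
      rw [hphi] at hlt hle
      simp only [Finset.mem_coe, Finset.mem_Ioc]
      exact ⟨hlt, hle⟩
    · intro c1 hc1 c2 hc2 heq
      have heq2 : rnk s j' c1 = rnk s j' c2 := heq
      simp only [Finset.coe_filter, Set.mem_setOf_eq] at hc1 hc2
      obtain ⟨hc1BR, hphi1⟩ := hc1
      obtain ⟨hc2BR, hphi2⟩ := hc2
      have hp1 := (hprops c1 hc1BR).1
      have hp2 := (hprops c2 hc2BR).1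
      have hcol1 : 1 ≤ j' + s c1 := by omega
      have hcol2 : 1 ≤ j' + s c2 := by omega
      rcases Nat.lt_trichotomy c1 c2 with hlt | heq' | hgt
      · have := rnk_strict_mono (s := s) j' hlt hcol2; omega
      · exact heq'
      · have := rnk_strict_mono (s := s) j' hgt hcol1; omega
  calc (BR.filter (fun c => (pB c : ℤ) - s c = j')).card
      ≤ _ := hcard
    _ = (rows.filter (fun c' => (pos c' : ℤ) - s c' = j')).card := by
        rw [Nat.card_Ioc]; omega

lemma sum_indicator_card {l : ℕ} (n : ℕ) (P : ℕ → Prop) [DecidablePred P] :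
    (∑ x ∈ Finset.range n, if P x then (1:ℕ) else 0) = ((Finset.range n).filter P).card := by
  simp [Finset.sum_boole]

end Aux3

/-- the dominance lemma (analogue of Fayers' Lemma 2.3): if `μ` is cylindric,
obtained from `μ⁻` by adding `k` boxes in rows `c(μ),…,c(μ)+k-1`, and `ν →^{j:k} λ` with
`μ⁻ ⊵ ν^R`, then `μ ⊵ λ^R`, with equality `μ = λ^R` only if `μ⁻ = ν^R`. -/
theorem dominance_lemma (l n k : ℕ) (s : ℕ → ℤ) (hs : IsMulticharge l s) (h : ℕ) (j : ℤ)
    (lam mu muM nu nuR lamR : ℕ → ℕ →₀ ℕ)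
    (hmplam : IsMultipartition l lam) (hmpmu : IsMultipartition l mu)
    (hmpmuM : IsMultipartition l muM) (hmpnu : IsMultipartition l nu)
    (hrlam : rank l lam = n) (hrmu : rank l mu = n)
    (hrnu : rank l nu = n - k) (hrmuM : rank l muM = n - k)
    (hk : 1 ≤ k) (hkn : k ≤ n)
    (hcyl : Cylindric l s mu)
    (c0 : ℕ) (hne : (mu c0) 1 ≠ 0) (hminc : ∀ c, c < c0 → (mu c) 1 = 0)
    (harr : Arrow l s h j (Finset.Ico c0 (c0 + k)) muM mu)
    (rowsnu : Finset ℕ) (hcard : rowsnu.card = k)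
    (harrnu : Arrow l s h j rowsnu nu lam)
    (hregnu : IsRegularization l s nu nuR)
    (hreglam : IsRegularization l s lam lamR)
    (hdom : Dominates l muM nuR) :
    Dominates l mu lamR ∧ (mu = lamR → muM = nuR) := by
  classical
  obtain ⟨harr1, harr2, harr3⟩ := harr
  obtain ⟨hnu1, hnu2, hnu3⟩ := harrnu
  have hc0A : c0 ∈ Finset.Ico c0 (c0 + k) := Finset.mem_Ico.mpr ⟨le_refl _, by omega⟩
  have hc0l : c0 < l := harr1 c0 hc0A
  -- choose positions for the mu-side arrow
  have hqex : ∀ c : ℕ, ∃ p : ℕ, c ∈ Finset.Ico c0 (c0 + k) →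
      (1 ≤ p ∧ symbEntry s h muM c p = j + h - 1 ∧ symbEntry s h mu c p = j + h ∧
       ∀ i, 1 ≤ i → i ≠ p → symbEntry s h mu c i = symbEntry s h muM c i) := by
    intro c
    by_cases hc : c ∈ Finset.Ico c0 (c0 + k)
    · obtain ⟨p, hp1, _, hp3, hp4, hp5⟩ := harr2 c hc
      exact ⟨p, fun _ => ⟨hp1, hp3, hp4, hp5⟩⟩
    · exact ⟨0, fun hc' => absurd hc' hc⟩
  choose qq hqq using hqex
  -- choose positions for the nu-side arrow
  have hpex : ∀ c : ℕ, ∃ p : ℕ, c ∈ rowsnu →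
      (1 ≤ p ∧ symbEntry s h nu c p = j + h - 1 ∧ symbEntry s h lam c p = j + h ∧
       ∀ i, 1 ≤ i → i ≠ p → symbEntry s h lam c i = symbEntry s h nu c i) := by
    intro c
    by_cases hc : c ∈ rowsnu
    · obtain ⟨p, hp1, _, hp3, hp4, hp5⟩ := hnu2 c hc
      exact ⟨p, fun _ => ⟨hp1, hp3, hp4, hp5⟩⟩
    · exact ⟨0, fun hc' => absurd hc' hc⟩
  choose pos hpos using hpex
  have hposp : ∀ c ∈ rowsnu, 1 ≤ pos c ∧ symbEntry s h nu c (pos c) = j + h - 1 ∧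
      symbEntry s h lam c (pos c) = j + h ∧
      ∀ i, 1 ≤ i → i ≠ pos c → symbEntry s h lam c i = symbEntry s h nu c i :=
    fun c hc => hpos c hc
  -- mu-side row relations
  have hmurel : ∀ c ∈ Finset.Ico c0 (c0 + k), 1 ≤ qq c ∧
      ((muM c (qq c) : ℤ) = j - 1 + qq c - s c) ∧
      (∀ i, mu c i = muM c i + if i = qq c then 1 else 0) := by
    intro c hc
    obtain ⟨h1, h2, h3, h4⟩ := hqq c hc
    have hcontent : (muM c (qq c) : ℤ) = j - 1 + qq c - s c := by
      have := h2; unfold symbEntry at this; omega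
    refine ⟨h1, hcontent, ?_⟩
    intro i
    rcases Nat.eq_zero_or_pos i with rfl | hipos
    · rw [if_neg (by omega), (hmpmu.1 c).1, (hmpmuM.1 c).1]
    · by_cases hiq : i = qq c
      · subst hiq
        rw [if_pos rfl]
        have e2 := h2; have e3 := h3
        unfold symbEntry at e2 e3
        omega
      · rw [if_neg hiq, add_zero]
        have := h4 i hipos hiq
        unfold symbEntry at this
        omega
  have hmueq : ∀ c, c ∉ Finset.Ico c0 (c0 + k) → mu c = muM c := by
    intro c hc
    ext i
    rcases Nat.eq_zero_or_pos i with rfl | hipos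
    · rw [(hmpmu.1 c).1, (hmpmuM.1 c).1]
    · have := harr3 c hc i hipos
      unfold symbEntry at this
      omega
  -- rows below c0 are zero
  have hmuzero : ∀ c, c < c0 → mu c = 0 := by
    intro c hcc
    ext i
    rcases Nat.eq_zero_or_pos i with rfl | hipos
    · rw [(hmpmu.1 c).1]; rfl
    · have h1 := (hmpmu.1 c).2 1 i (le_refl 1) hipos
      have h2 := hminc c hcc
      simp only [Finsupp.coe_zero, Pi.zero_apply]
      omega
  have hmuMzero : ∀ c, c < c0 → muM c = 0 := by
    intro c hcc
    rw [← hmueq c (by simp only [Finset.mem_Ico]; omega)]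
    exact hmuzero c hcc
  have hnuRzero : ∀ c, c < c0 → nuR c = 0 := by
    intro c hcc
    have hcl : c < l := by omega
    ext i
    rcases Nat.eq_zero_or_pos i with rfl | hipos
    · rw [(hregnu.1.1 c).1]; rfl
    · have hd := hdom c hcl i
      have hz1 : ∑ i' ∈ Finset.range c, ((muM i').sum fun _ v => v) = 0 := by
        apply Finset.sum_eq_zero
        intro i' hi'
        rw [hmuMzero i' (by have := Finset.mem_range.mp hi'; omega)]
        rfl
      have hz2 : ∑ jj ∈ Finset.range i, (muM c) (jj+1) = 0 := by
        apply Finset.sum_eq_zero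
        intro jj _
        rw [hmuMzero c hcc]
        rfl
      rw [hz1, hz2] at hd
      have hz3 : ∑ jj ∈ Finset.range i, (nuR c) (jj+1) = 0 := by omega
      have hz4 := Finset.sum_eq_zero_iff.mp hz3 (i-1) (Finset.mem_range.mpr (by omega))
      simp only [Finsupp.coe_zero, Pi.zero_apply]
      rw [show i - 1 + 1 = i by omega] at hz4
      exact hz4
  -- bump data for lamR vs nuR
  have hboxex : ∀ c : ℕ, ∃ p : ℕ, (c < l ∧ lamR c ≠ nuR c) →
      (1 ≤ p ∧ ((nuR c p : ℤ) = j - 1 + p - s c) ∧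
       (∀ i, lamR c i = nuR c i + if i = p then 1 else 0) ∧
       cntF l s h nu ((p:ℤ) - s c) (j + h) < rnk s ((p:ℤ) - s c) c ∧
       rnk s ((p:ℤ) - s c) c ≤ cntF l s h nu ((p:ℤ) - s c) (j + h) +
         (rowsnu.filter (fun c' => (pos c' : ℤ) = ((p:ℤ) - s c) + s c')).card) := by
    intro c
    by_cases hc : c < l ∧ lamR c ≠ nuR c
    · obtain ⟨p, hp⟩ := row_box hs j rowsnu pos nu lam nuR lamR hnu1 hposp hnu3
        hregnu hreglam c hc.1 hc.2
      exact ⟨p, fun _ => hp⟩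
    · exact ⟨0, fun hc' => absurd hc' hc⟩
  choose pB hpB using hboxex
  have hbl : ∀ c, lamR c ≠ nuR c → c < l := by
    intro c hb
    by_contra hcl
    push_neg at hcl
    rw [hreglam.1.2 c hcl, hregnu.1.2 c hcl] at hb
    exact hb rfl
  -- no bump below c0
  have hnobump : ∀ c, c < c0 → lamR c = nuR c := by
    intro c hcc
    by_contra hb
    have hcl := hbl c hb
    obtain ⟨hp1, hcontent, _, _, _⟩ := hpB c ⟨hcl, hb⟩
    have h0 : nuR c (pB c) = 0 := by rw [hnuRzero c hcc]; rfl
    rw [h0] at hcontent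
    have hsc : j ≤ s c := by push_cast at hcontent; omega
    obtain ⟨hq1, hqcontent, hqrel⟩ := hmurel c0 hc0A
    have hmupos : (mu c0 (qq c0) : ℤ) = j + (qq c0 : ℤ) - s c0 := by
      have := hqrel (qq c0)
      rw [if_pos rfl] at this
      push_cast [this]
      omega
    have hmupos1 : 1 ≤ mu c0 (qq c0) := by
      have := hqrel (qq c0); rw [if_pos rfl] at this; omega
    set j2 : ℤ := (qq c0 : ℤ) - s c0 with hj2
    have hcolc : 1 ≤ j2 + s c := by
      have : 1 ≤ j + j2 := by omega
      omega
    have hchain := col_mono_part hs hcyl j2 c0 c (le_of_lt hcc) hc0l hcolc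
    have htn0 : (j2 + s c0).toNat = qq c0 := by omega
    rw [htn0, hmuzero c hcc] at hchain
    simp only [Finsupp.coe_zero, Pi.zero_apply] at hchain
    omega
  -- bump rows are < l and ≥ c0
  have hbge : ∀ c, lamR c ≠ nuR c → c0 ≤ c := by
    intro c hb
    by_contra hcc
    exact hb (hnobump c (by omega))
  -- total bump count
  have hBRcard : ((Finset.range l).filter (fun c => lamR c ≠ nuR c)).card ≤ k := by
    rw [← hcard]
    apply fiber_count rowsnu pos nu j _ pB
    intro c hcmem
    simp only [Finset.mem_filter, Finset.mem_range] at hcmem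
    obtain ⟨h1, h2, h3, h4, h5⟩ := hpB c ⟨hcmem.1, hcmem.2⟩
    exact ⟨h1, h4, h5⟩
  -- row-sum relations
  have hrowslam : ∀ c', c' < l → ((lamR c').sum fun _ v => v)
      = ((nuR c').sum fun _ v => v) + if lamR c' ≠ nuR c' then 1 else 0 := by
    intro c' hcl
    by_cases hb : lamR c' ≠ nuR c'
    · rw [if_pos hb]
      obtain ⟨hp1, _, hrel, _, _⟩ := hpB c' ⟨hcl, hb⟩
      exact sum_box hp1 hrel
    · rw [if_neg hb]
      push_neg at hb
      rw [hb, add_zero]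
  have hrowsmu : ∀ c', ((mu c').sum fun _ v => v)
      = ((muM c').sum fun _ v => v) + if c' ∈ Finset.Ico c0 (c0+k) then 1 else 0 := by
    intro c'
    by_cases hA : c' ∈ Finset.Ico c0 (c0+k)
    · rw [if_pos hA]
      obtain ⟨hq1, _, hqrel⟩ := hmurel c' hA
      exact sum_box hq1 hqrel
    · rw [if_neg hA, hmueq c' hA, add_zero]
  -- master sum formulas
  have hSlam : ∀ c, c < l → ∀ m,
      ((∑ i ∈ Finset.range c, (lamR i).sum fun _ v => v) + ∑ jj ∈ Finset.range m, (lamR c) (jj+1))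
      = (((∑ i ∈ Finset.range c, (nuR i).sum fun _ v => v) + ∑ jj ∈ Finset.range m, (nuR c) (jj+1))
        + ((Finset.range c).filter (fun c' => lamR c' ≠ nuR c')).card)
        + (if lamR c ≠ nuR c ∧ pB c ≤ m then 1 else 0) := by
    intro c hcl m
    have h1 : ∑ i ∈ Finset.range c, ((lamR i).sum fun _ v => v)
        = (∑ i ∈ Finset.range c, ((nuR i).sum fun _ v => v))
          + ((Finset.range c).filter (fun c' => lamR c' ≠ nuR c')).card := by
      rw [Finset.sum_congr rfl
          (fun i hi => hrowslam i (by have := Finset.mem_range.mp hi; omega)),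
        Finset.sum_add_distrib]
      congr 1
      exact sum_indicator_card (l := l) _ _
    have h2 : ∑ jj ∈ Finset.range m, (lamR c) (jj+1)
        = (∑ jj ∈ Finset.range m, (nuR c) (jj+1))
          + if lamR c ≠ nuR c ∧ pB c ≤ m then 1 else 0 := by
      by_cases hb : lamR c ≠ nuR c
      · obtain ⟨hp1, _, hrel, _, _⟩ := hpB c ⟨hcl, hb⟩
        rw [psum_box hp1 hrel m]
        congr 1
        by_cases hpm : pB c ≤ m
        · rw [if_pos hpm, if_pos ⟨hb, hpm⟩]
        · rw [if_neg hpm, if_neg (fun habs => hpm habs.2)]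
      · push_neg at hb
        rw [hb]
        simp
    rw [h1, h2]
    omega
  have hSmu : ∀ c m,
      ((∑ i ∈ Finset.range c, (mu i).sum fun _ v => v) + ∑ jj ∈ Finset.range m, (mu c) (jj+1))
      = (((∑ i ∈ Finset.range c, (muM i).sum fun _ v => v) + ∑ jj ∈ Finset.range m, (muM c) (jj+1))
        + ((Finset.range c).filter (fun c' => c' ∈ Finset.Ico c0 (c0+k))).card)
        + (if c ∈ Finset.Ico c0 (c0+k) ∧ qq c ≤ m then 1 else 0) := by
    intro c m
    have h1 : ∑ i ∈ Finset.range c, ((mu i).sum fun _ v => v)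
        = (∑ i ∈ Finset.range c, ((muM i).sum fun _ v => v))
          + ((Finset.range c).filter (fun c' => c' ∈ Finset.Ico c0 (c0+k))).card := by
      rw [Finset.sum_congr rfl (fun i _ => hrowsmu i), Finset.sum_add_distrib]
      congr 1
      exact sum_indicator_card (l := l) _ _
    have h2 : ∑ jj ∈ Finset.range m, (mu c) (jj+1)
        = (∑ jj ∈ Finset.range m, (muM c) (jj+1))
          + if c ∈ Finset.Ico c0 (c0+k) ∧ qq c ≤ m then 1 else 0 := by
      by_cases hA : c ∈ Finset.Ico c0 (c0+k)
      · obtain ⟨hq1, _, hqrel⟩ := hmurel c hA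
        rw [psum_box hq1 hqrel m]
        congr 1
        by_cases hqm : qq c ≤ m
        · rw [if_pos hqm, if_pos ⟨hA, hqm⟩]
        · rw [if_neg hqm, if_neg (fun habs => hqm habs.2)]
      · rw [hmueq c hA]
        rw [if_neg (fun habs => hA habs.1), add_zero]
    rw [h1, h2]
    omega
  -- the A-count formula
  have hAc : ∀ c, ((Finset.range c).filter (fun c' => c' ∈ Finset.Ico c0 (c0+k))).card
      = min c (c0+k) - min c c0 := by
    intro c
    rw [show (Finset.range c).filter (fun c' => c' ∈ Finset.Ico c0 (c0+k))
        = Finset.Ico (min c c0) (min c (c0+k)) by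
      ext x
      simp only [Finset.mem_filter, Finset.mem_range, Finset.mem_Ico]
      omega]
    rw [Nat.card_Ico]
  -- bump-count bounds
  have hBc1 : ∀ c, ((Finset.range c).filter (fun c' => lamR c' ≠ nuR c')).card ≤ c - c0 := by
    intro c
    calc ((Finset.range c).filter (fun c' => lamR c' ≠ nuR c')).card
        ≤ (Finset.Ico c0 c).card := by
          apply Finset.card_le_card
          intro x hx
          simp only [Finset.mem_filter, Finset.mem_range] at hx
          exact Finset.mem_Ico.mpr ⟨hbge x hx.2, hx.1⟩
      _ = c - c0 := Nat.card_Ico c0 c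
  have hBc2 : ∀ c, c ≤ l → ((Finset.range c).filter (fun c' => lamR c' ≠ nuR c')).card ≤ k :=
    fun c hc => le_trans
      (Finset.card_le_card (Finset.filter_subset_filter _ (Finset.range_subset_range.mpr hc)))
      hBRcard
  have hBc3 : ∀ c, c < l → lamR c ≠ nuR c →
      ((Finset.range c).filter (fun c' => lamR c' ≠ nuR c')).card + 1 ≤ k := by
    intro c hcl hb
    have hstep : ((Finset.range (c+1)).filter (fun c' => lamR c' ≠ nuR c')).card
        = ((Finset.range c).filter (fun c' => lamR c' ≠ nuR c')).card + 1 := by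
      rw [Finset.range_add_one, Finset.filter_insert, if_pos hb,
        Finset.card_insert_of_notMem (by simp)]
    have h2 := hBc2 (c+1) (by omega)
    omega
  -- the strict case
  have hstrict : ∀ c m, c < l → c ∈ Finset.Ico c0 (c0+k) → lamR c ≠ nuR c →
      pB c ≤ m → m < qq c →
      ((∑ i ∈ Finset.range c, (nuR i).sum fun _ v => v) + ∑ jj ∈ Finset.range m, (nuR c) (jj+1)) + 1
      ≤ (∑ i ∈ Finset.range c, (muM i).sum fun _ v => v) + ∑ jj ∈ Finset.range m, (muM c) (jj+1) := by
    intro c m hcl hA hb hpm hmq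
    obtain ⟨hp1, hcontent, _, _, _⟩ := hpB c ⟨hcl, hb⟩
    obtain ⟨hq1, hqcontent, _⟩ := hmurel c hA
    have hm1 : 1 ≤ m := le_trans hp1 hpm
    by_contra habs
    push_neg at habs
    have hd := hdom c hcl m
    have hd2 := hdom c hcl (m-1)
    have hpeel : ∀ (α : ℕ → ℕ →₀ ℕ), ∑ jj ∈ Finset.range m, (α c) (jj+1)
        = (∑ jj ∈ Finset.range (m-1), (α c) (jj+1)) + α c m := by
      intro α
      have := Finset.sum_range_succ (fun jj => (α c) (jj+1)) (m-1)
      rw [show m-1+1 = m by omega] at this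
      exact this
    have e1 := hpeel nuR
    have e2 := hpeel muM
    have hle : muM c m ≤ nuR c m := by omega
    have a0 : (nuR c m : ℤ) ≤ (nuR c (pB c) : ℤ) :=
      Int.ofNat_le.mpr ((hregnu.1.1 c).2 (pB c) m hp1 hpm)
    have a1 : (muM c (qq c) : ℤ) ≤ (muM c m : ℤ) :=
      Int.ofNat_le.mpr ((hmpmuM.1 c).2 m (qq c) hm1 (by omega))
    have a2 : (muM c m : ℤ) ≤ (nuR c m : ℤ) := Int.ofNat_le.mpr hle
    omega
  constructor
  · -- dominance
    intro c hcl m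
    rw [hSlam c hcl m, hSmu c m]
    have hd := hdom c hcl m
    have hAceq := hAc c
    have hB1 := hBc1 c
    rcases Nat.lt_or_ge c c0 with hpos1 | hpos1
    · have hBc0 : ((Finset.range c).filter (fun c' => lamR c' ≠ nuR c')).card = 0 := by
        rw [Finset.card_eq_zero, Finset.filter_eq_empty_iff]
        intro x hx hb
        have := hbge x hb
        have := Finset.mem_range.mp hx
        omega
      rw [hBc0, if_neg (fun habs => by have := hbge c habs.1; omega)]
      split_ifs <;> omega
    · rcases Nat.lt_or_ge c (c0+k) with hpos2 | hpos2
      · by_cases hbi : lamR c ≠ nuR c ∧ pB c ≤ m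
        · by_cases hqi : qq c ≤ m
          · rw [if_pos hbi, if_pos ⟨Finset.mem_Ico.mpr ⟨hpos1, hpos2⟩, hqi⟩]
            omega
          · have hst := hstrict c m hcl (Finset.mem_Ico.mpr ⟨hpos1, hpos2⟩) hbi.1 hbi.2
              (by omega)
            rw [if_pos hbi, if_neg (fun habs => hqi habs.2)]
            omega
        · rw [if_neg hbi]
          split_ifs <;> omega
      · by_cases hbi : lamR c ≠ nuR c ∧ pB c ≤ m
        · rw [if_pos hbi]
          have := hBc3 c hcl hbi.1
          split_ifs <;> omega
        · rw [if_neg hbi]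
          have := hBc2 c (by omega)
          split_ifs <;> omega
  · -- equality clause
    intro hmueqlam
    have hABle : ∀ c, c < l → ∀ m,
        (((Finset.range c).filter (fun c' => c' ∈ Finset.Ico c0 (c0+k))).card
          + (if c ∈ Finset.Ico c0 (c0+k) ∧ qq c ≤ m then 1 else 0))
        ≤ (((Finset.range c).filter (fun c' => lamR c' ≠ nuR c')).card
          + (if lamR c ≠ nuR c ∧ pB c ≤ m then 1 else 0)) := by
      intro c hcl m
      have h1 := hSlam c hcl m
      have h2 := hSmu c m
      rw [hmueqlam] at h2
      have h3 := hdom c hcl m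
      omega
    have hbmax : ∀ c, lamR c ≠ nuR c → c < c0 + k := by
      intro c hb
      by_contra hge
      push_neg at hge
      have hcl := hbl c hb
      have h1 := hABle c hcl (pB c - 1)
      obtain ⟨hp1, _, _, _, _⟩ := hpB c ⟨hcl, hb⟩
      rw [if_neg (fun habs => by have := Finset.mem_Ico.mp habs.1; omega)] at h1
      rw [if_neg (fun habs => by omega)] at h1
      rw [hAc c] at h1
      have hB := hBc3 c hcl hb
      omega
    have hArowsbump : ∀ c ∈ Finset.Ico c0 (c0+k), lamR c ≠ nuR c ∧ pB c ≤ qq c := by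
      intro c hcA
      have hcl : c < l := harr1 c hcA
      have h1 := hABle c hcl (qq c)
      rw [if_pos ⟨hcA, le_refl _⟩, hAc c] at h1
      have hB1 := hBc1 c
      have hcc := Finset.mem_Ico.mp hcA
      by_cases hbi : lamR c ≠ nuR c ∧ pB c ≤ qq c
      · exact hbi
      · rw [if_neg hbi] at h1
        omega
    have hpq : ∀ c ∈ Finset.Ico c0 (c0+k), pB c = qq c := by
      intro c hcA
      obtain ⟨hb, hple⟩ := hArowsbump c hcA
      have hcl : c < l := harr1 c hcA
      obtain ⟨hp1, hcontent, hrel, _, _⟩ := hpB c ⟨hcl, hb⟩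
      obtain ⟨hq1, hqcontent, hqrel⟩ := hmurel c hcA
      by_contra hne
      have hlt2 : pB c < qq c := by omega
      have e1 : (mu c (pB c) : ℤ) = j + pB c - s c := by
        rw [hmueqlam]
        have := hrel (pB c)
        rw [if_pos rfl] at this
        rw [this]
        push_cast
        omega
      have e2 : (mu c (qq c) : ℤ) = j + qq c - s c := by
        have := hqrel (qq c)
        rw [if_pos rfl] at this
        rw [this]
        push_cast
        omega
      have hmono : (mu c (qq c) : ℤ) ≤ (mu c (pB c) : ℤ) :=
        Int.ofNat_le.mpr ((hmpmu.1 c).2 (pB c) (qq c) hp1 (by omega))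
      omega
    funext c
    by_cases hcl : c < l
    · by_cases hcA : c ∈ Finset.Ico c0 (c0+k)
      · obtain ⟨hb, _⟩ := hArowsbump c hcA
        obtain ⟨hp1, _, hrel, _, _⟩ := hpB c ⟨hcl, hb⟩
        obtain ⟨hq1, _, hqrel⟩ := hmurel c hcA
        ext i
        have e1 := hrel i
        have e2 := hqrel i
        rw [hmueqlam] at e2
        rw [hpq c hcA] at e1
        by_cases hiq : i = qq c
        · rw [if_pos hiq] at e1 e2
          omega
        · rw [if_neg hiq] at e1 e2
          omega
      · by_cases hb : lamR c ≠ nuR c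
        · exact absurd (Finset.mem_Ico.mpr ⟨hbge c hb, hbmax c hb⟩) hcA
        · push_neg at hb
          have h1 := hmueq c hcA
          rw [hmueqlam] at h1
          rw [← h1, hb]
    · rw [hmpmuM.2 c (by omega), hregnu.1.2 c (by omega)]

end AK
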